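/- Let a, b be nonzero integers, let k ≥ 2 be an integer, and let η be a nonzero complex number. Then there exists a multiplicative function f : ℕ → ℂ (namely one with f(p) = 1 for every prime p dividing L_k and f(p) = η^{-1}·S(a,b;pL_k) for every prime p not dividing L_k) such that for all real X ≥ 1, the number of squarefree integers n ≤ X with exactly k prime factors satisfying S(a,b;n) = η·f(n) is at least π(X/L_k) − k + 1. In particular, the upper bound π(X/L_k) + 7(|a|+|b|+√k)X^{1−1/(2k)} is sharp up to the error term. -/

import Mathlib

/-- `e(t) = exp(2πit)`. -/
noncomputable def eC (t : ℂ) : ℂ := Complex.exp (2 * Real.pi * Complex.I * t)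

/-- The Kloosterman sum `S(a,b;c) = Σ_{x mod c, (x,c)=1} e((ax + b x̄)/c)`. -/
noncomputable def kloos (a b : ℤ) (c : ℕ) : ℂ :=
  ∑ x ∈ Finset.range c,
    if Nat.gcd x c = 1 then
      eC (((a : ℂ) * (x : ℂ) + (b : ℂ) * (((x : ZMod c)⁻¹).val : ℂ)) / (c : ℂ))
    else 0

/-- `π(X)`: the number of primes `≤ X`. -/
noncomputable def primesLe (X : ℝ) : ℕ := Set.ncard {p : ℕ | p.Prime ∧ (p : ℝ) ≤ X}

/-- `L_k`: the product of the first `k - 1` primes. -/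
noncomputable def Lk (k : ℕ) : ℕ := ∏ i ∈ Finset.range (k - 1), Nat.nth Nat.Prime i

lemma squarefree_prod_primes {s : Finset ℕ} (hs : ∀ p ∈ s, p.Prime) :
    Squarefree (∏ p ∈ s, p) := by
  classical
  induction s using Finset.induction_on with
  | empty => simp
  | insert p s ha ih =>
    rw [Finset.prod_insert ha]
    have hp := hs p (Finset.mem_insert_self _ _)
    have hs' : ∀ q ∈ s, q.Prime := fun q hq => hs q (Finset.mem_insert_of_mem hq)
    have hcop : Nat.Coprime p (∏ q ∈ s, q) := by
      rw [hp.coprime_iff_not_dvd]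
      intro hdvd
      obtain ⟨q, hq, hpq⟩ := (Prime.dvd_finset_prod_iff hp.prime _).mp hdvd
      exact ha (((hs' q hq).dvd_iff_eq hp.ne_one).mp hpq ▸ hq)
    exact (Nat.squarefree_mul hcop).mpr ⟨hp.prime.squarefree, ih hs'⟩

theorem stmt2 (a b : ℤ) (ha : a ≠ 0) (hb : b ≠ 0) (k : ℕ) (hk : 2 ≤ k)
    (η : ℂ) (hη : η ≠ 0) :
    ∃ f : ℕ → ℂ,
      (∀ m n : ℕ, Nat.Coprime m n → f (m * n) = f m * f n) ∧
      (∀ p : ℕ, p.Prime → p ∣ Lk k → f p = 1) ∧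
      (∀ p : ℕ, p.Prime → ¬ p ∣ Lk k → f p = η⁻¹ * kloos a b (p * Lk k)) ∧
      ∀ X : ℝ, 1 ≤ X →
        (primesLe (X / (Lk k : ℝ)) : ℝ) - (k : ℝ) + 1 ≤
          (Set.ncard {n : ℕ | (n : ℝ) ≤ X ∧ Squarefree n ∧ n.primeFactors.card = k ∧
              kloos a b n = η * f n} : ℝ) := by
  classical
  set L := Lk k with hLdef
  -- basic facts about L
  set s : Finset ℕ := (Finset.range (k - 1)).image (Nat.nth Nat.Prime) with hsdef
  have hnthinj : Function.Injective (Nat.nth Nat.Prime) :=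
    Nat.nth_injective Nat.infinite_setOf_prime
  have hLs : L = ∏ p ∈ s, p := by
    rw [hLdef, Lk, hsdef, Finset.prod_image (fun x _ y _ h => hnthinj h)]
  have hsprime : ∀ p ∈ s, p.Prime := by
    intro p hp
    simp only [hsdef, Finset.mem_image] at hp
    obtain ⟨i, _, rfl⟩ := hp
    exact Nat.prime_nth_prime i
  have hLsf : Squarefree L := hLs ▸ squarefree_prod_primes hsprime
  have hL0 : L ≠ 0 := hLsf.ne_zero
  have hpf : L.primeFactors = s := by rw [hLs]; exact Nat.primeFactors_prod hsprime
  have hscard : s.card = k - 1 := by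
    rw [hsdef, Finset.card_image_of_injective _ hnthinj, Finset.card_range]
  -- the multiplicative function
  set c : ℕ → ℂ := fun p => if p ∣ L then 1 else η⁻¹ * kloos a b (p * L) with hcdef
  set f : ℕ → ℂ := fun n => ∏ p ∈ n.primeFactors, c p with hfdef
  have hone : f 1 = 1 := by simp [hfdef]
  have hzero : f 0 = 1 := by simp [hfdef]
  have hmul : ∀ m n : ℕ, Nat.Coprime m n → f (m * n) = f m * f n := by
    intro m n h
    rcases eq_or_ne m 0 with rfl | hm
    · have : n = 1 := Nat.coprime_zero_left n |>.mp h
      subst this; simp [hzero, hone]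
    rcases eq_or_ne n 0 with rfl | hn
    · have : m = 1 := Nat.coprime_zero_right m |>.mp h
      subst this; simp [hzero, hone]
    rw [hfdef]
    simp only
    rw [Nat.primeFactors_mul hm hn, Finset.prod_union h.disjoint_primeFactors]
  have hfp : ∀ p : ℕ, p.Prime → f p = c p := by
    intro p hp
    rw [hfdef]; simp only
    rw [hp.primeFactors, Finset.prod_singleton]
  have hfL : f L = 1 := by
    rw [hfdef]; simp only
    exact Finset.prod_eq_one fun p hp => by
      simp [hcdef, Nat.dvd_of_mem_primeFactors hp]
  refine ⟨f, hmul, ?_, ?_, ?_⟩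
  · intro p hp hdvd; rw [hfp p hp]; simp [hcdef, hdvd]
  · intro p hp hdvd; rw [hfp p hp]; simp [hcdef, hdvd]
  intro X hX
  have hL1 : (1 : ℝ) ≤ (L : ℝ) := by exact_mod_cast Nat.one_le_iff_ne_zero.mpr hL0
  have hLpos : (0 : ℝ) < (L : ℝ) := lt_of_lt_of_le one_pos hL1
  set P : Set ℕ := {p : ℕ | p.Prime ∧ (p : ℝ) ≤ X / (L : ℝ)} with hPdef
  set T : Set ℕ := {n : ℕ | (n : ℝ) ≤ X ∧ Squarefree n ∧ n.primeFactors.card = k ∧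
      kloos a b n = η * f n} with hTdef
  have hPsub : P ⊆ Set.Iic (Nat.floor X) := by
    intro p hp
    have : (p : ℝ) ≤ X := le_trans hp.2 (div_le_self (le_trans zero_le_one hX) hL1)
    exact Nat.le_floor this
  have hPfin : P.Finite := (Set.finite_Iic _).subset hPsub
  have hTfin : T.Finite := (Set.finite_Iic (Nat.floor X)).subset fun n hn => Nat.le_floor hn.1
  set P' : Set ℕ := P \ {p : ℕ | p ∣ L} with hP'def
  have hP'fin : P'.Finite := hPfin.subset Set.diff_subset
  -- P ⊆ P' ∪ primeFactors L
  have hcover : P ⊆ P' ∪ ↑(L.primeFactors) := by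
    intro p hp
    by_cases hd : p ∣ L
    · exact Or.inr (Nat.mem_primeFactors.mpr ⟨hp.1, hd, hL0⟩)
    · exact Or.inl ⟨hp, hd⟩
  have hcard1 : P.ncard ≤ P'.ncard + (k - 1) := by
    calc P.ncard ≤ (P' ∪ ↑(L.primeFactors)).ncard :=
          Set.ncard_le_ncard hcover (hP'fin.union (L.primeFactors.finite_toSet))
      _ ≤ P'.ncard + (↑(L.primeFactors) : Set ℕ).ncard := Set.ncard_union_le _ _
      _ = P'.ncard + (k - 1) := by rw [Set.ncard_coe_finset, hpf, hscard]
  -- the injection p ↦ p * L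
  have hinj : Function.Injective (fun p : ℕ => p * L) := fun x y h =>
    Nat.eq_of_mul_eq_mul_right (Nat.pos_of_ne_zero hL0) h
  have himg : (fun p : ℕ => p * L) '' P' ⊆ T := by
    rintro _ ⟨p, ⟨⟨hp, hple⟩, hnd⟩, rfl⟩
    have hnd' : ¬ p ∣ L := hnd
    have hcop : Nat.Coprime p L := (hp.coprime_iff_not_dvd).mpr hnd'
    have hpnot : p ∉ L.primeFactors := fun h => hnd' (Nat.dvd_of_mem_primeFactors h)
    constructor
    · push_cast
      calc (p : ℝ) * L ≤ (X / L) * L := by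
            exact mul_le_mul_of_nonneg_right hple (le_of_lt hLpos)
        _ = X := div_mul_cancel₀ X (ne_of_gt hLpos)
    refine ⟨(Nat.squarefree_mul hcop).mpr ⟨hp.prime.squarefree, hLsf⟩, ?_, ?_⟩
    · rw [Nat.primeFactors_mul hp.ne_zero hL0, hp.primeFactors,
        Finset.card_union_of_disjoint (by simpa using hpnot), Finset.card_singleton,
        hpf, hscard]
      omega
    · have : f (p * L) = f p * f L := hmul p L hcop
      rw [this, hfL, mul_one, hfp p hp]
      simp only [hcdef, if_neg hnd']
      rw [← mul_assoc, mul_inv_cancel₀ hη, one_mul]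
  have hcard2 : P'.ncard ≤ T.ncard := by
    calc P'.ncard = ((fun p : ℕ => p * L) '' P').ncard :=
          (Set.ncard_image_of_injective _ hinj).symm
      _ ≤ T.ncard := Set.ncard_le_ncard himg hTfin
  have hprim : primesLe (X / (L : ℝ)) = P.ncard := rfl
  rw [hprim]
  have hk1 : ((k - 1 : ℕ) : ℝ) = (k : ℝ) - 1 := by
    have : 1 ≤ k := le_trans one_le_two hk
    push_cast [this]; ring
  have h1R : (P.ncard : ℝ) ≤ (P'.ncard : ℝ) + ((k : ℝ) - 1) := by
    rw [← hk1]; exact_mod_cast hcard1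
  have h2R : (P'.ncard : ℝ) ≤ (T.ncard : ℝ) := by exact_mod_cast hcard2
  linarith
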